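/- Let λ = (λ₁, ..., λ_k) be a partition with λ₁ = n−k and all λ_i > 0, let λ̄ = (n−k+1, λ₂, ..., λ_k) and λ⁻ = (λ₂−1, ..., λ_k−1, 0). Then in the ring R = ℤ[q,t₁,...,t_n][x]^{S_k}/J (torus indices mod n), s_{λ̄}(x|t) ≡ q · s_{λ⁻}(x|t) mod J. -/

import Mathlib

noncomputable section

/-- Coefficient ring `ℤ[q, t₁, …, tₙ]`: `none ↦ q`, `some i ↦ t_{i+1}`. -/
abbrev CoeffRing (n : ℕ) := MvPolynomial (Option (Fin n)) ℤ

/-- The full polynomial ring in `x₁, …, x_k` over `ℤ[q, t₁, …, tₙ]`. -/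
abbrev PolyRing (n k : ℕ) := MvPolynomial (Fin k) (CoeffRing n)

/-- The quantum parameter `q`. -/
def qvar (n : ℕ) : CoeffRing n := MvPolynomial.X none

/-- The torus weight `t_j`, with index reduced mod `n`
(representatives `{1, …, n}`). -/
def tvar (n : ℕ) (hn : 0 < n) (j : ℤ) : CoeffRing n :=
  MvPolynomial.X (some ⟨((j - 1) % (n : ℤ)).toNat, by
    have h0 : (0 : ℤ) < (n : ℤ) := by exact_mod_cast hn
    have h1 := Int.emod_nonneg (j - 1) h0.ne'
    have h2 := Int.emod_lt_of_pos (j - 1) h0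
    omega⟩)

/-- The factorial complete homogeneous polynomial `h_m(x | τ^{-s} t)`:
the factorial Schur polynomial of the one-row partition `(m)`, with torus
weights shifted by `τ^{-s}` (i.e. `t_i` replaced by `t_{i-s}`). -/
def hfac (n k : ℕ) (hn : 0 < n) (m : ℕ) (s : ℤ) : PolyRing n k :=
  ∑ f ∈ Finset.univ.filter (fun f : Fin m → Fin k => ∀ a b : Fin m, a ≤ b → f a ≤ f b),
    ∏ j : Fin m,
      (MvPolynomial.X (f j) -
        MvPolynomial.C (tvar n hn (((f j : ℕ) : ℤ) + 1 + ((j : ℕ) : ℤ) - s)))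

/-- `hfac` extended to integer degrees (zero in negative degrees). -/
def hzfac (n k : ℕ) (hn : 0 < n) (m s : ℤ) : PolyRing n k :=
  if 0 ≤ m then hfac n k hn m.toNat s else 0

/-- The quantum ideal
`J = ⟨h_{n-k+1}(x|t), …, h_{n-1}(x|t), h_n(x|t) + (-1)^k q⟩`. -/
def Jideal (n k : ℕ) (hn : 0 < n) : Ideal (PolyRing n k) :=
  Ideal.span
    (((fun m => hfac n k hn m 0) '' {m : ℕ | n - k + 1 ≤ m ∧ m ≤ n - 1}) ∪
      {hfac n k hn n 0 + (-1 : PolyRing n k) ^ k * MvPolynomial.C (qvar n)})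

/-- The factorial Schur polynomial, via the factorial Jacobi–Trudi formula
`s_λ(x|t) = det (h_{λ_i + j - i}(x | τ^{1-j} t))_{1 ≤ i,j ≤ k}`. -/
def sfac (n k : ℕ) (hn : 0 < n) (lam : Fin k → ℕ) : PolyRing n k :=
  Matrix.det (Matrix.of fun i j : Fin k =>
    hzfac n k hn ((lam i : ℤ) + ((j : ℕ) : ℤ) - ((i : ℕ) : ℤ)) ((j : ℕ) : ℤ))

variable (n k : ℕ) (hn : 0 < n)

/-- bounded version: only monotone `f` with all values `< b`. -/
def gaux (m : ℕ) (s : ℤ) (b : ℕ) : PolyRing n k :=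
  ∑ f ∈ Finset.univ.filter (fun f : Fin m → Fin k =>
      (∀ a b : Fin m, a ≤ b → f a ≤ f b) ∧ ∀ j, (f j : ℕ) < b),
    ∏ j : Fin m,
      (MvPolynomial.X (f j) -
        MvPolynomial.C (tvar n hn (((f j : ℕ) : ℤ) + 1 + ((j : ℕ) : ℤ) - s)))

lemma hfac_eq_gaux (m : ℕ) (s : ℤ) : hfac n k hn m s = gaux n k hn m s k := by
  unfold hfac gaux
  apply Finset.sum_congr _ (fun _ _ => rfl)
  apply Finset.filter_congr
  intro f _
  simp only [iff_self_and]
  exact fun _ j => (f j).isLt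

lemma gaux_zero_left (s : ℤ) (b : ℕ) : gaux n k hn 0 s b = 1 := by
  unfold gaux
  rw [Finset.filter_true_of_mem (by intro f _; exact ⟨fun a => a.elim0, fun j => j.elim0⟩)]
  simp

lemma gaux_zero_right (m : ℕ) (s : ℤ) : gaux n k hn (m+1) s 0 = 0 := by
  unfold gaux
  rw [Finset.filter_false_of_mem, Finset.sum_empty]
  intro f _ h
  exact Nat.not_lt_zero _ (h.2 0)

open MvPolynomial Finset in
lemma gaux_succ (m : ℕ) (s : ℤ) (b : ℕ) (hb : b < k) :
    gaux n k hn (m+1) s (b+1) = gaux n k hn (m+1) s b +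
      (X (⟨b, hb⟩ : Fin k) - C (tvar n hn ((b:ℤ) + (m:ℤ) + 1 - s))) * gaux n k hn m s (b+1) := by
  unfold gaux
  rw [← Finset.sum_filter_add_sum_filter_not _ (fun f => f (Fin.last m) ≠ ⟨b, hb⟩)]
  congr 1
  · -- part with f (last) ≠ b : equals gaux (m+1) s b
    apply Finset.sum_congr _ (fun _ _ => rfl)
    rw [Finset.filter_filter]
    apply Finset.filter_congr
    intro f _
    constructor
    · rintro ⟨⟨hm, hlt⟩, hne⟩
      refine ⟨hm, fun j => ?_⟩
      have h1 := Fin.le_def.mp (hm _ _ (Fin.le_last j))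
      have h2 : (f (Fin.last m) : ℕ) < b + 1 := hlt _
      have h3 : (f (Fin.last m) : ℕ) ≠ b := fun h => hne (Fin.ext h)
      omega
    · rintro ⟨hm, hlt⟩
      refine ⟨⟨hm, fun j => Nat.lt_succ_of_lt (hlt j)⟩, fun h => ?_⟩
      have := hlt (Fin.last m)
      rw [h] at this
      simp at this
  · -- part with f (last) = b
    rw [mul_comm, Finset.sum_mul]
    apply Finset.sum_nbij' (fun f => f ∘ Fin.castSucc) (fun g => Fin.snoc g ⟨b, hb⟩)
    · intro f hf
      simp only [Finset.mem_filter, Finset.mem_univ, true_and, not_not] at hf ⊢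
      exact ⟨fun a b' hab => hf.1.1 _ _ (Fin.castSucc_le_castSucc_iff.mpr hab),
        fun j => hf.1.2 _⟩
    · intro g hg
      simp only [Finset.mem_filter, Finset.mem_univ, true_and, not_not] at hg ⊢
      refine ⟨⟨?_, ?_⟩, ?_⟩
      · intro a b' hab
        induction b' using Fin.lastCases with
        | last =>
          induction a using Fin.lastCases with
          | last => exact le_refl _
          | cast a =>
            rw [Fin.snoc_last, Fin.snoc_castSucc]
            exact Fin.le_def.mpr (Nat.lt_succ_iff.mp (hg.2 a))
        | cast b' =>
          induction a using Fin.lastCases with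
          | last => exact absurd hab (Fin.not_le.mpr (Fin.castSucc_lt_last b'))
          | cast a =>
            rw [Fin.snoc_castSucc, Fin.snoc_castSucc]
            exact hg.1 _ _ (Fin.castSucc_le_castSucc_iff.mp hab)
      · intro j
        induction j using Fin.lastCases with
        | last => rw [Fin.snoc_last]; exact Nat.lt_succ_self b
        | cast j => rw [Fin.snoc_castSucc]; exact hg.2 j
      · rw [Fin.snoc_last]
    · intro f hf
      simp only [Finset.mem_filter, not_not] at hf
      have : f ∘ Fin.castSucc = Fin.init f := rfl
      rw [this, ← hf.2, Fin.snoc_init_self]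
    · intro g hg
      funext j
      simp [Fin.snoc_castSucc]
    · intro f hf
      simp only [Finset.mem_filter, not_not] at hf
      rw [Fin.prod_univ_castSucc, hf.2]
      have harg : (((((⟨b, hb⟩ : Fin k) : ℕ)) : ℤ)) + 1 + (((Fin.last m : ℕ)) : ℤ) - s
          = (b:ℤ) + (m:ℤ) + 1 - s := by
        simp only [Fin.val_last]
        push_cast
        ring
      rw [harg]
      rfl

open MvPolynomial in
lemma gaux_shift : ∀ b : ℕ, b ≤ k → ∀ (m : ℕ) (s : ℤ),
    gaux n k hn (m+1) (s+1) b = gaux n k hn (m+1) s b +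
      (C (tvar n hn ((m:ℤ) + (b:ℤ) - s)) - C (tvar n hn (-s))) * gaux n k hn m s b := by
  intro b
  induction b with
  | zero =>
    intro _ m s
    rw [gaux_zero_right, gaux_zero_right]
    cases m with
    | zero =>
      rw [gaux_zero_left]
      have : ((0:ℕ):ℤ) + ((0:ℕ):ℤ) - s = -s := by norm_num
      rw [this]
      ring
    | succ m => rw [gaux_zero_right]; ring
  | succ b ih =>
    intro hb1 m s
    have hb : b < k := hb1
    have ihb := ih (Nat.le_of_succ_le hb1)
    induction m with
    | zero =>
      have R1 := gaux_succ n k hn 0 (s+1) b hb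
      have R2 := gaux_succ n k hn 0 s b hb
      have Ib := ihb 0 s
      have e1 : (b:ℤ) + ((0:ℕ):ℤ) + 1 - (s+1) = (b:ℤ) - s := by push_cast; ring
      have e2 : ((0:ℕ):ℤ) + (b:ℤ) - s = (b:ℤ) - s := by push_cast; ring
      have e3 : ((0:ℕ):ℤ) + ((b+1:ℕ):ℤ) - s = (b:ℤ) + ((0:ℕ):ℤ) + 1 - s := by push_cast; ring
      rw [e1] at R1
      rw [e2] at Ib
      rw [e3]
      simp only [gaux_zero_left] at R1 R2 Ib ⊢
      linear_combination R1 + Ib - R2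
    | succ m ihm =>
      have R1 := gaux_succ n k hn (m+1) (s+1) b hb
      have R2 := gaux_succ n k hn (m+1) s b hb
      have R3 := gaux_succ n k hn m s b hb
      have Ib := ihb (m+1) s
      have e1 : (b:ℤ) + ((m+1:ℕ):ℤ) + 1 - (s+1) = (b:ℤ) + (m:ℤ) + 1 - s := by push_cast; ring
      have e2 : (b:ℤ) + ((m+1:ℕ):ℤ) + 1 - s = (b:ℤ) + (m:ℤ) + 2 - s := by push_cast; ring
      have e4 : ((m+1:ℕ):ℤ) + (b:ℤ) - s = (b:ℤ) + (m:ℤ) + 1 - s := by push_cast; ring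
      have e5 : ((m:ℕ):ℤ) + ((b+1:ℕ):ℤ) - s = (b:ℤ) + (m:ℤ) + 1 - s := by push_cast; ring
      have e6 : ((m+1:ℕ):ℤ) + ((b+1:ℕ):ℤ) - s = (b:ℤ) + (m:ℤ) + 2 - s := by push_cast; ring
      rw [e1] at R1
      rw [e2] at R2
      rw [e4] at Ib
      rw [e5] at ihm
      rw [e6]
      linear_combination R1 + Ib +
        (X (⟨b, hb⟩ : Fin k) - C (tvar n hn ((b:ℤ) + (m:ℤ) + 1 - s))) * ihm - R2 -
        (C (tvar n hn ((b:ℤ) + (m:ℤ) + 1 - s)) - C (tvar n hn (-s))) * R3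

open MvPolynomial in
lemma hfac_shift (m : ℕ) (s : ℤ) :
    hfac n k hn (m+1) (s+1) = hfac n k hn (m+1) s +
      (C (tvar n hn ((m:ℤ) + (k:ℤ) - s)) - C (tvar n hn (-s))) * hfac n k hn m s := by
  rw [hfac_eq_gaux, hfac_eq_gaux, hfac_eq_gaux]
  exact gaux_shift n k hn k le_rfl m s

lemma hfac_mem_gen (d : ℕ) (h1 : n - k + 1 ≤ d) (h2 : d ≤ n - 1) :
    hfac n k hn d 0 ∈ Jideal n k hn := by
  apply Ideal.subset_span
  exact Or.inl ⟨d, ⟨h1, h2⟩, rfl⟩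

lemma hfac_mem (hkn : k ≤ n) : ∀ (s : ℕ) (d : ℕ), n - k + 1 + s ≤ d → d ≤ n - 1 →
    hfac n k hn d (s : ℤ) ∈ Jideal n k hn := by
  intro s
  induction s with
  | zero =>
    intro d h1 h2
    rw [Nat.cast_zero]
    exact hfac_mem_gen n k hn d (by omega) h2
  | succ s ih =>
    intro d h1 h2
    obtain ⟨d', rfl⟩ : ∃ d', d = d' + 1 := ⟨d - 1, by omega⟩
    have : ((s + 1 : ℕ) : ℤ) = (s : ℤ) + 1 := by push_cast; ring
    rw [this, hfac_shift]
    exact Ideal.add_mem _ (ih (d'+1) (by omega) h2)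
      (Ideal.mul_mem_left _ _ (ih d' (by omega) (by omega)))

open MvPolynomial in
lemma hn_mem (hk : 0 < k) (hkn : k ≤ n) : ∀ (s : ℕ), s ≤ k - 1 →
    hfac n k hn n (s : ℤ) + (-1 : PolyRing n k) ^ k * C (qvar n) ∈ Jideal n k hn := by
  intro s
  induction s with
  | zero =>
    intro _
    rw [Nat.cast_zero]
    exact Ideal.subset_span (Or.inr rfl)
  | succ s ih =>
    intro hs
    have e : ((s + 1 : ℕ) : ℤ) = (s : ℤ) + 1 := by push_cast; ring
    rw [e]
    obtain ⟨n', rfl⟩ : ∃ n', n = n' + 1 := ⟨n - 1, by omega⟩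
    rw [hfac_shift]
    have h1 := ih (by omega)
    have h2 : hfac (n'+1) k hn n' (s : ℤ) ∈ Jideal (n'+1) k hn :=
      hfac_mem _ _ hn hkn s n' (by omega) (by omega)
    have h3 := Ideal.add_mem _ h1 (Ideal.mul_mem_left _
      (MvPolynomial.C (tvar (n'+1) hn ((n':ℤ) + (k:ℤ) - s)) - MvPolynomial.C (tvar (n'+1) hn (-s))) h2)
    convert h3 using 1
    ring

lemma hfac_zero (s : ℤ) : hfac n k hn 0 s = 1 := by
  rw [hfac_eq_gaux]; exact gaux_zero_left n k hn s k

lemma det_first_row_single {S : Type*} [CommRing S] {m : ℕ}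
    (A : Matrix (Fin (m+1)) (Fin (m+1)) S)
    (h0 : ∀ j, j ≠ Fin.last m → A 0 j = 0) :
    A.det = (-1)^m * A 0 (Fin.last m) * (A.submatrix Fin.succ Fin.castSucc).det := by
  rw [Matrix.det_succ_row_zero, Finset.sum_eq_single (Fin.last m)]
  · rw [Fin.succAbove_last, Fin.val_last]
  · intro j _ hj
    rw [h0 j hj]; ring
  · simp

lemma det_last_row_single {S : Type*} [CommRing S] {m : ℕ}
    (B : Matrix (Fin (m+1)) (Fin (m+1)) S)
    (h0 : ∀ j, j ≠ Fin.last m → B (Fin.last m) j = 0)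
    (h1 : B (Fin.last m) (Fin.last m) = 1) :
    B.det = (B.submatrix Fin.castSucc Fin.castSucc).det := by
  rw [Matrix.det_succ_row B (Fin.last m), Finset.sum_eq_single (Fin.last m)]
  · rw [Fin.succAbove_last, h1, Fin.val_last]
    have : ((-1:S))^(m+m) = 1 := by
      rw [← two_mul, pow_mul]; norm_num
    rw [this]; ring
  · intro j _ hj
    rw [h0 j hj]; ring
  · simp

set_option synthInstance.maxHeartbeats 1000000 in
set_option maxHeartbeats 1000000 in
open MvPolynomial in
theorem sfac_bar_eq_q_sfac_minus (n k : ℕ) (hn : 0 < n) (hk : 0 < k) (hkn : k ≤ n)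
    (lam : Fin k → ℕ) (hpart : Antitone lam)
    (htop : lam ⟨0, hk⟩ = n - k) (hpos : ∀ i, 0 < lam i) :
    sfac n k hn (Function.update lam ⟨0, hk⟩ (n - k + 1)) -
      MvPolynomial.C (qvar n) *
        sfac n k hn (fun i => if h : (i : ℕ) + 1 < k then lam ⟨(i : ℕ) + 1, h⟩ - 1 else 0)
      ∈ Jideal n k hn := by
  obtain ⟨m, rfl⟩ : ∃ m, k = m + 1 := ⟨k - 1, by omega⟩
  have h0 : (⟨0, hk⟩ : Fin (m+1)) = 0 := rfl
  rw [← Ideal.Quotient.eq]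
  set J := Jideal n (m+1) hn with hJ
  set φ : PolyRing n (m+1) →+* PolyRing n (m+1) ⧸ J := Ideal.Quotient.mk J with hφ
  show φ _ = φ _
  rw [sfac, sfac, map_mul, RingHom.map_det (S := PolyRing n (m+1) ⧸ J) φ,
    RingHom.map_det (S := PolyRing n (m+1) ⧸ J) φ,
    RingHom.mapMatrix_apply, RingHom.mapMatrix_apply]
  set lamb := Function.update lam ⟨0, hk⟩ (n - (m+1) + 1) with hlamb
  have hl0 : lamb 0 = n - (m+1) + 1 := by rw [hlamb, ← h0, Function.update_self]
  -- first row of the λ̄-matrix vanishes except at the last column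
  have hrow0 : ∀ j : Fin (m+1), j ≠ Fin.last m →
      (((Matrix.of fun i j : Fin (m+1) =>
        hzfac n (m+1) hn ((lamb i : ℤ) + ((j : ℕ) : ℤ) - ((i : ℕ) : ℤ)) ((j : ℕ) : ℤ)).map φ)) 0 j
        = 0 := by
    intro j hj
    have hjm : (j : ℕ) ≠ m := fun h => hj (Fin.ext (by simpa using h))
    have hjlt : (j : ℕ) < m := by have := j.isLt; omega
    simp only [Matrix.map_apply, Matrix.of_apply]
    have harg2 : ((lamb 0 : ℤ) + ((j : ℕ) : ℤ) - (((0 : Fin (m+1)) : ℕ) : ℤ))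
        = ((n - (m+1) + 1 + (j:ℕ) : ℕ) : ℤ) := by
      rw [hl0]
      simp only [Fin.val_zero]
      push_cast
      ring
    rw [harg2, hzfac, if_pos (Int.natCast_nonneg _), Int.toNat_natCast]
    apply Ideal.Quotient.eq_zero_iff_mem.mpr
    exact hfac_mem n (m+1) hn hkn (j : ℕ) _ (by omega) (by omega)
  -- last entry of first row
  have hrowlast :
      (((Matrix.of fun i j : Fin (m+1) =>
        hzfac n (m+1) hn ((lamb i : ℤ) + ((j : ℕ) : ℤ) - ((i : ℕ) : ℤ)) ((j : ℕ) : ℤ)).map φ)) 0 (Fin.last m)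
        = (-1)^m * φ (C (qvar n)) := by
    simp only [Matrix.map_apply, Matrix.of_apply]
    have harg : ((lamb 0 : ℤ) + (((Fin.last m : Fin (m+1)) : ℕ) : ℤ) - (((0 : Fin (m+1)) : ℕ) : ℤ))
        = ((n : ℕ) : ℤ) := by
      rw [hl0]
      simp only [Fin.val_zero, Fin.val_last]
      omega
    rw [harg, hzfac, if_pos (Int.natCast_nonneg _), Int.toNat_natCast]
    have hmem := hn_mem n (m+1) hn hk hkn m (by omega)
    have h2 : φ (hfac n (m+1) hn n ((m : ℕ) : ℤ) + (-1 : PolyRing n (m+1))^(m+1) * C (qvar n)) = 0 :=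
      Ideal.Quotient.eq_zero_iff_mem.mpr hmem
    rw [RingHom.map_add, RingHom.map_mul, RingHom.map_pow] at h2
    rw [show φ (-1 : PolyRing n (m+1)) = -1 from (φ.map_neg 1).trans (by rw [φ.map_one])] at h2
    have hv : (((Fin.last m : Fin (m+1)) : ℕ) : ℤ) = ((m : ℕ) : ℤ) := by simp
    rw [hv]
    linear_combination h2
  rw [det_first_row_single _ hrow0, hrowlast]
  -- the λ⁻ matrix: last row
  have hNrow : ∀ j : Fin (m+1), j ≠ Fin.last m →
      (((Matrix.of fun i j : Fin (m+1) =>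
        hzfac n (m+1) hn (((if h : (i : ℕ) + 1 < m + 1 then lam ⟨(i : ℕ) + 1, h⟩ - 1 else 0 : ℕ) : ℤ)
          + ((j : ℕ) : ℤ) - ((i : ℕ) : ℤ)) ((j : ℕ) : ℤ)).map φ)) (Fin.last m) j = 0 := by
    intro j hj
    have hjm : (j : ℕ) ≠ m := fun h => hj (Fin.ext (by simpa using h))
    have hjlt : (j : ℕ) < m := by have := j.isLt; omega
    simp only [Matrix.map_apply, Matrix.of_apply]
    rw [dif_neg (by simp), hzfac, if_neg (by simp; omega), map_zero]
  have hNlast :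
      (((Matrix.of fun i j : Fin (m+1) =>
        hzfac n (m+1) hn (((if h : (i : ℕ) + 1 < m + 1 then lam ⟨(i : ℕ) + 1, h⟩ - 1 else 0 : ℕ) : ℤ)
          + ((j : ℕ) : ℤ) - ((i : ℕ) : ℤ)) ((j : ℕ) : ℤ)).map φ)) (Fin.last m) (Fin.last m) = 1 := by
    simp only [Matrix.map_apply, Matrix.of_apply]
    rw [dif_neg (by simp)]
    have harg : (((0:ℕ) : ℤ) + (((Fin.last m : Fin (m+1)) : ℕ) : ℤ) - (((Fin.last m : Fin (m+1)) : ℕ) : ℤ)) = 0 := by ring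
    rw [harg, hzfac, if_pos le_rfl, Int.toNat_zero, hfac_zero, map_one]
  rw [det_last_row_single _ hNrow hNlast]
  -- the two submatrices agree
  have hsub : (Matrix.of fun i j : Fin (m+1) =>
        hzfac n (m+1) hn ((lamb i : ℤ) + ((j : ℕ) : ℤ) - ((i : ℕ) : ℤ)) ((j : ℕ) : ℤ)).submatrix
          Fin.succ Fin.castSucc
      = (Matrix.of fun i j : Fin (m+1) =>
        hzfac n (m+1) hn (((if h : (i : ℕ) + 1 < m + 1 then lam ⟨(i : ℕ) + 1, h⟩ - 1 else 0 : ℕ) : ℤ)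
          + ((j : ℕ) : ℤ) - ((i : ℕ) : ℤ)) ((j : ℕ) : ℤ)).submatrix Fin.castSucc Fin.castSucc := by
    apply Matrix.ext
    intro i j
    simp only [Matrix.submatrix_apply, Matrix.of_apply]
    have hne : Fin.succ i ≠ (⟨0, hk⟩ : Fin (m+1)) := by rw [h0]; exact Fin.succ_ne_zero i
    have hlv : lamb (Fin.succ i) = lam (Fin.succ i) := by rw [hlamb, Function.update_of_ne hne]
    have hcond : ((Fin.castSucc i : Fin (m+1)) : ℕ) + 1 < m + 1 := by
      simp only [Fin.coe_castSucc]
      omega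
    rw [hlv, dif_pos hcond]
    have hfin : (⟨((Fin.castSucc i : Fin (m+1)) : ℕ) + 1, hcond⟩ : Fin (m+1)) = Fin.succ i :=
      Fin.ext (by simp)
    rw [hfin]
    congr 1
    have hp := hpos (Fin.succ i)
    simp only [Fin.coe_castSucc, Fin.val_succ]
    omega
  rw [Matrix.submatrix_map, Matrix.submatrix_map, hsub]
  set D := ((Matrix.of fun i j : Fin (m+1) =>
        hzfac n (m+1) hn (((if h : (i : ℕ) + 1 < m + 1 then lam ⟨(i : ℕ) + 1, h⟩ - 1 else 0 : ℕ) : ℤ)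
          + ((j : ℕ) : ℤ) - ((i : ℕ) : ℤ)) ((j : ℕ) : ℤ)).submatrix Fin.castSucc Fin.castSucc).map φ
  have hsq : ((-1 : PolyRing n (m+1) ⧸ J))^m * (-1)^m = 1 := by
    have h1 : ((-1 : PolyRing n (m+1) ⧸ J)) * (-1) = 1 := by ring
    calc ((-1 : PolyRing n (m+1) ⧸ J))^m * (-1)^m
        = ((-1) * (-1))^m := (mul_pow (-1 : PolyRing n (m+1) ⧸ J) (-1) m).symm
      _ = 1^m := by rw [h1]
      _ = 1 := one_pow m
  calc (-1:PolyRing n (m+1) ⧸ J)^m * ((-1)^m * φ (C (qvar n))) * D.det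
      = ((-1:PolyRing n (m+1) ⧸ J)^m * (-1)^m) * (φ (C (qvar n)) * D.det) := by ring
    _ = φ (C (qvar n)) * D.det := by rw [hsq]; ring
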